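/- Let D ≥ 2 and let w = (w_1, …, w_J) ∈ ℝ^p be partitioned into J groups with w_j ∈ ℝ^{p_j}. Let ω_j ∈ ℝ^{p_j} and γ_{j,d} ∈ ℝ (j ∈ {1,…,J}, d ∈ {1,…,D−1}) be D-gating parameters satisfying w_j = (∏_{d=1}^{D−1} γ_{j,d})·ω_j for every j and that are balanced, i.e., ‖ω_j‖₂² = γ_{j,d}² for all j and d. Then (1/D)·(Σ_{j=1}^{J} ‖ω_j‖₂² + Σ_{j=1}^{J} Σ_{d=1}^{D−1} γ_{j,d}²) = Σ_{j=1}^{J} ‖w_j‖₂^{2/D}; in particular, for any function L₀ : ℝ^p → ℝ and any λ ≥ 0, L₀(w) + (λ/D)(‖ω‖₂² + ‖Γ‖_F²) = L₀(w) + λ‖w‖_{2,2/D}^{2/D}, where ‖ω‖₂² = Σ_j ‖ω_j‖₂², ‖Γ‖_F² = Σ_{j,d} γ_{j,d}², and ‖w‖_{2,2/D}^{2/D} = Σ_j ‖w_j‖₂^{2/D}. -/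

import Mathlib

/-- at balanced `D`-gating parameters, the smooth surrogate penalty equals the
structured `L_{2,2/D}` penalty, and hence the `D`-gated objective equals the
`L_{2,2/D}`-regularized objective. -/
theorem stmt_3 (D J : ℕ) (hD : 2 ≤ D) (p : Fin J → ℕ)
    (ω : (j : Fin J) → EuclideanSpace ℝ (Fin (p j)))
    (γ : Fin J → Fin (D - 1) → ℝ)
    (w : (j : Fin J) → EuclideanSpace ℝ (Fin (p j)))
    (hw : ∀ j, w j = (∏ d, γ j d) • ω j)
    (hbal : ∀ j d, ‖ω j‖ ^ 2 = γ j d ^ 2) :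
    (1 / (D : ℝ)) * ((∑ j, ‖ω j‖ ^ 2) + ∑ j, ∑ d, γ j d ^ 2) =
        ∑ j, ‖w j‖ ^ ((2 : ℝ) / (D : ℝ)) ∧
      ∀ (L₀ : ((j : Fin J) → EuclideanSpace ℝ (Fin (p j))) → ℝ) (lam : ℝ), 0 ≤ lam →
        L₀ w + (lam / (D : ℝ)) * ((∑ j, ‖ω j‖ ^ 2) + ∑ j, ∑ d, γ j d ^ 2) =
          L₀ w + lam * ∑ j, ‖w j‖ ^ ((2 : ℝ) / (D : ℝ)) := by
  have hDpos : (0 : ℝ) < D := by positivity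
  have habs : ∀ j d, |γ j d| = ‖ω j‖ := fun j d => by
    have := hbal j d
    rw [← Real.sqrt_sq_eq_abs, ← this, Real.sqrt_sq (norm_nonneg _)]
  have hwnorm : ∀ j, ‖w j‖ = ‖ω j‖ ^ D := by
    intro j
    rw [hw j, norm_smul]
    have : |∏ d, γ j d| = ‖ω j‖ ^ (D - 1) := by
      rw [Finset.abs_prod]
      simp [habs j]
    rw [Real.norm_eq_abs, this, ← pow_succ]
    congr 1
    omega
  have hkey : ∀ j, ‖w j‖ ^ ((2 : ℝ) / (D : ℝ)) = ‖ω j‖ ^ 2 := by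
    intro j
    rw [hwnorm j, ← Real.rpow_natCast ‖ω j‖ D, ← Real.rpow_natCast ‖ω j‖ 2,
      ← Real.rpow_mul (norm_nonneg _)]
    congr 1
    field_simp
    norm_num
  have hmain : (1 / (D : ℝ)) * ((∑ j, ‖ω j‖ ^ 2) + ∑ j, ∑ d, γ j d ^ 2) =
      ∑ j, ‖w j‖ ^ ((2 : ℝ) / (D : ℝ)) := by
    have hsum : ∀ j, ∑ d, γ j d ^ 2 = ((D : ℝ) - 1) * ‖ω j‖ ^ 2 := by
      intro j
      rw [Finset.sum_congr rfl fun d _ => (hbal j d).symm]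
      simp only [Finset.sum_const, Finset.card_univ, Fintype.card_fin, nsmul_eq_mul]
      congr 1
      have : (1 : ℕ) ≤ D := by omega
      push_cast [Nat.cast_sub this]
      ring
    simp only [hkey, hsum, ← Finset.mul_sum]
    field_simp
    ring
  refine ⟨hmain, fun L₀ lam hlam => ?_⟩
  congr 1
  rw [div_eq_mul_one_div, mul_assoc, hmain]
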